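/- Let Σ₂ be a symmetric positive definite p×p real matrix and μ₂ ∈ ℝ^p. Consider the function F(μ₁, σ) = (1/2)·[ ln det Σ₂ − Σ_{j=1}^p ln σ_j − p + (μ₁ − μ₂)ᵀ Σ₂^{-1} (μ₁ − μ₂) + Σ_{j=1}^p (Σ₂^{-1})_{jj}·σ_j ] over μ₁ ∈ ℝ^p and σ ∈ (0,∞)^p, which equals the Kullback–Leibler divergence KL( N(μ₁, diag(σ₁,…,σ_p)) ‖ N(μ₂, Σ₂) ) between the Gaussian with mean μ₁ and diagonal covariance diag(σ) and the Gaussian with mean μ₂ and covariance Σ₂. Then F has a unique minimizer, attained at μ₁ = μ₂ and σ_j = 1/(Σ₂^{-1})_{jj} for j = 1,…,p. -/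

import Mathlib

open Matrix Finset

lemma aux_diag_pos {p : ℕ} {M : Matrix (Fin p) (Fin p) ℝ} (hM : M.PosDef) (j : Fin p) :
    0 < M j j := by
  have h := hM.dotProduct_mulVec_pos (x := Pi.single j 1) (by
    intro h
    have := congrFun h j
    simp at this)
  simpa [dotProduct, mulVec, Pi.single_apply, Finset.sum_ite_eq', mul_comm] using h

lemma aux_term_nonneg {a s : ℝ} (ha : 0 < a) (hs : 0 < s) :
    0 ≤ a * s - Real.log s - (1 + Real.log a) := by
  have h := Real.log_le_sub_one_of_pos (mul_pos ha hs)
  rw [Real.log_mul ha.ne' hs.ne'] at h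
  linarith

lemma aux_term_eq {a s : ℝ} (ha : 0 < a) (hs : 0 < s)
    (h : a * s - Real.log s - (1 + Real.log a) = 0) : s = a⁻¹ := by
  by_contra hne
  have hx : a * s ≠ 1 := by
    intro h1
    apply hne
    field_simp
    linarith [mul_comm a s, h1]
  have := Real.log_lt_sub_one_of_pos (mul_pos ha hs) hx
  rw [Real.log_mul ha.ne' hs.ne'] at this
  linarith

/-- The Kullback–Leibler divergence
`F(μ₁, σ) = KL( N(μ₁, diag σ) ‖ N(μ₂, Σ₂) )`, written in closed form, has a unique minimizer
over `μ₁ ∈ ℝᵖ`, `σ ∈ (0,∞)ᵖ`, attained at `μ₁ = μ₂` and `σⱼ = 1/(Σ₂⁻¹)ⱼⱼ`. -/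
theorem meanfield_gaussian_kl_unique_minimizer
    {p : ℕ} (S : Matrix (Fin p) (Fin p) ℝ) (hS : S.PosDef) (μ2 : Fin p → ℝ)
    (F : (Fin p → ℝ) → (Fin p → ℝ) → ℝ)
    (hF : ∀ μ1 σ, F μ1 σ =
      (1 / 2) * (Real.log S.det - (∑ j, Real.log (σ j)) - (p : ℝ)
        + (μ1 - μ2) ⬝ᵥ S⁻¹.mulVec (μ1 - μ2)
        + ∑ j, S⁻¹ j j * σ j)) :
    (∀ μ1 σ, (∀ j, 0 < σ j) → F μ2 (fun j => (S⁻¹ j j)⁻¹) ≤ F μ1 σ) ∧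
    (∀ μ1 σ, (∀ j, 0 < σ j) → F μ1 σ = F μ2 (fun j => (S⁻¹ j j)⁻¹) →
      μ1 = μ2 ∧ σ = fun j => (S⁻¹ j j)⁻¹) := by
  have hSinv : (S⁻¹).PosDef := hS.inv
  have ha : ∀ j, 0 < S⁻¹ j j := fun j => aux_diag_pos hSinv j
  -- value at the claimed minimizer
  have hFmin : F μ2 (fun j => (S⁻¹ j j)⁻¹) =
      (1 / 2) * (Real.log S.det + ∑ j, Real.log (S⁻¹ j j)) := by
    rw [hF]
    have h1 : ∀ j, Real.log ((S⁻¹ j j)⁻¹) = - Real.log (S⁻¹ j j) := fun j => Real.log_inv _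
    have h2 : ∀ j, S⁻¹ j j * (S⁻¹ j j)⁻¹ = 1 := fun j => mul_inv_cancel₀ (ha j).ne'
    simp only [h1, h2, Finset.sum_neg_distrib, Finset.sum_const, Finset.card_univ,
      Fintype.card_fin, nsmul_eq_mul, mul_one, sub_self, zero_dotProduct, dotProduct_zero]
    ring
  -- key decomposition
  have hdiff : ∀ μ1 σ, (∀ j, 0 < σ j) →
      F μ1 σ - F μ2 (fun j => (S⁻¹ j j)⁻¹) =
      (1 / 2) * ((μ1 - μ2) ⬝ᵥ S⁻¹.mulVec (μ1 - μ2)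
        + ∑ j, (S⁻¹ j j * σ j - Real.log (σ j) - (1 + Real.log (S⁻¹ j j)))) := by
    intro μ1 σ hσ
    rw [hF, hFmin]
    rw [Finset.sum_sub_distrib, Finset.sum_sub_distrib, Finset.sum_add_distrib,
      Finset.sum_const, Finset.card_univ, Fintype.card_fin, nsmul_eq_mul, mul_one]
    ring
  have hQnn : ∀ μ1 : Fin p → ℝ, 0 ≤ (μ1 - μ2) ⬝ᵥ S⁻¹.mulVec (μ1 - μ2) := by
    intro μ1
    rcases eq_or_ne (μ1 - μ2) 0 with h | h
    · simp [h]
    · exact le_of_lt (by simpa using hSinv.dotProduct_mulVec_pos h)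
  have hTnn : ∀ (σ : Fin p → ℝ), (∀ j, 0 < σ j) →
      0 ≤ ∑ j, (S⁻¹ j j * σ j - Real.log (σ j) - (1 + Real.log (S⁻¹ j j))) :=
    fun σ hσ => Finset.sum_nonneg fun j _ => aux_term_nonneg (ha j) (hσ j)
  constructor
  · intro μ1 σ hσ
    have := hdiff μ1 σ hσ
    nlinarith [hQnn μ1, hTnn σ hσ]
  · intro μ1 σ hσ heq
    have hd := hdiff μ1 σ hσ
    rw [heq, sub_self] at hd
    have hQ := hQnn μ1
    have hT := hTnn σ hσ
    have hQ0 : (μ1 - μ2) ⬝ᵥ S⁻¹.mulVec (μ1 - μ2) = 0 := by linarith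
    have hT0 : ∑ j, (S⁻¹ j j * σ j - Real.log (σ j) - (1 + Real.log (S⁻¹ j j))) = 0 := by
      linarith
    constructor
    · by_contra hne
      have h : μ1 - μ2 ≠ 0 := sub_ne_zero.mpr hne
      have := hSinv.dotProduct_mulVec_pos (x := μ1 - μ2) h
      simp only [star_trivial] at this
      linarith
    · funext j
      have := (Finset.sum_eq_zero_iff_of_nonneg
        (fun j _ => aux_term_nonneg (ha j) (hσ j))).mp hT0 j (Finset.mem_univ j)
      exact aux_term_eq (ha j) (hσ j) this
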